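/- arXiv:1912.03190 — 2 statements merged into one kernel-verified Lean document; each statement's English description precedes it below -/
import Mathlib

section
/- Let φ: 𝔻 → 𝔻 be analytic and not constant. At every point z where φ'(z) ≠ 0, the Wirtinger derivative of A_φ with respect to z̄ satisfies (1-|z|²)·∂A_φ/∂z̄ = -z·A_φ(z) + |D_φ(z)|² - 1. -/
open Complex Metric Set Filter Asymptotics Topology

noncomputable def Dh (φ : ℂ → ℂ) (z : ℂ) : ℂ :=
  (1 - (‖z‖ : ℂ)^2) * deriv φ z / (1 - (‖φ z‖ : ℂ)^2)

noncomputable def Ah (φ : ℂ → ℂ) (z : ℂ) : ℂ :=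
  ((1 - (‖z‖ : ℂ)^2) / 2) * (deriv (deriv φ) z / deriv φ z) - (starRingEnd ℂ) z
    + (1 - (‖z‖ : ℂ)^2) * (starRingEnd ℂ) (φ z) * deriv φ z / (1 - (‖φ z‖ : ℂ)^2)

noncomputable def Sh (φ : ℂ → ℂ) (z : ℂ) : ℂ :=
  deriv (deriv (deriv φ)) z / deriv φ z - (3/2) * (deriv (deriv φ) z / deriv φ z)^2

noncomputable def wDz (f : ℂ → ℂ) (z : ℂ) : ℂ :=
  (fderiv ℝ f z 1 - Complex.I * fderiv ℝ f z Complex.I) / 2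

noncomputable def wDzbar (f : ℂ → ℂ) (z : ℂ) : ℂ :=
  (fderiv ℝ f z 1 + Complex.I * fderiv ℝ f z Complex.I) / 2

lemma fderivR_one {f : ℂ → ℂ} {z : ℂ} (h : DifferentiableAt ℂ f z) :
    fderiv ℝ f z 1 = deriv f z := by
  rw [(h.hasFDerivAt.restrictScalars ℝ).fderiv]; simp [fderiv_apply_one_eq_deriv]

lemma fderivR_I {f : ℂ → ℂ} {z : ℂ} (h : DifferentiableAt ℂ f z) :
    fderiv ℝ f z I = I * deriv f z := by
  rw [(h.hasFDerivAt.restrictScalars ℝ).fderiv]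
  have h1 : (I:ℂ) = I • (1:ℂ) := by simp
  simp only [ContinuousLinearMap.coe_restrictScalars']
  rw [h1, map_smul]
  simp [fderiv_apply_one_eq_deriv, smul_eq_mul]

lemma wDzbar_holo {f : ℂ → ℂ} {z : ℂ} (h : DifferentiableAt ℂ f z) : wDzbar f z = 0 := by
  simp [wDzbar, fderivR_one h, fderivR_I h]
  rw [show Complex.I * (Complex.I * deriv f z) = Complex.I^2 * deriv f z by ring, Complex.I_sq]; ring

lemma diffR_conj {f : ℂ → ℂ} {z : ℂ} (hf : DifferentiableAt ℝ f z) :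
    DifferentiableAt ℝ (fun w => (starRingEnd ℂ) (f w)) z :=
  (Complex.conjCLE.differentiable.differentiableAt).comp z hf

lemma fderiv_conj_comp {f : ℂ → ℂ} {z : ℂ} (hf : DifferentiableAt ℝ f z) (v : ℂ) :
    fderiv ℝ (fun w => (starRingEnd ℂ) (f w)) z v = (starRingEnd ℂ) (fderiv ℝ f z v) := by
  have h := (Complex.conjCLE.toContinuousLinearMap.hasFDerivAt (x := f z)).comp z hf.hasFDerivAt
  have h2 : HasFDerivAt (fun w => (starRingEnd ℂ) (f w))
      (Complex.conjCLE.toContinuousLinearMap.comp (fderiv ℝ f z)) z := h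
  rw [h2.fderiv]
  rfl

lemma wDzbar_conjf {f : ℂ → ℂ} {z : ℂ} (hf : DifferentiableAt ℂ f z) :
    wDzbar (fun w => (starRingEnd ℂ) (f w)) z = (starRingEnd ℂ) (deriv f z) := by
  rw [wDzbar, fderiv_conj_comp (hf.restrictScalars ℝ), fderiv_conj_comp (hf.restrictScalars ℝ),
    fderivR_one hf, fderivR_I hf, map_mul, Complex.conj_I]
  field_simp
  ring_nf
  rw [Complex.I_sq]
  ring

lemma wDzbar_add {f g : ℂ → ℂ} {z : ℂ} (hf : DifferentiableAt ℝ f z)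
    (hg : DifferentiableAt ℝ g z) :
    wDzbar (fun w => f w + g w) z = wDzbar f z + wDzbar g z := by
  rw [wDzbar, wDzbar, wDzbar, fderiv_fun_add hf hg]
  simp; ring

lemma wDzbar_sub {f g : ℂ → ℂ} {z : ℂ} (hf : DifferentiableAt ℝ f z)
    (hg : DifferentiableAt ℝ g z) :
    wDzbar (fun w => f w - g w) z = wDzbar f z - wDzbar g z := by
  rw [wDzbar, wDzbar, wDzbar, fderiv_fun_sub hf hg]
  simp; ring

lemma wDzbar_mul {f g : ℂ → ℂ} {z : ℂ} (hf : DifferentiableAt ℝ f z)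
    (hg : DifferentiableAt ℝ g z) :
    wDzbar (fun w => f w * g w) z = wDzbar f z * g z + f z * wDzbar g z := by
  rw [wDzbar, wDzbar, wDzbar, fderiv_fun_mul hf hg]
  simp [smul_eq_mul]; ring

lemma fderivC_apply {h : ℂ → ℂ} {y : ℂ} (v : ℂ) :
    fderiv ℂ h y v = deriv h y * v := by
  have h1 : v = v • (1:ℂ) := by simp
  rw [h1, map_smul, fderiv_apply_one_eq_deriv, smul_eq_mul, smul_eq_mul]; ring

lemma wDzbar_comp_holo {h f : ℂ → ℂ} {z : ℂ} (hh : DifferentiableAt ℂ h (f z))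
    (hf : DifferentiableAt ℝ f z) :
    wDzbar (fun w => h (f w)) z = deriv h (f z) * wDzbar f z := by
  have H := ((hh.hasFDerivAt.restrictScalars ℝ).comp z hf.hasFDerivAt)
  have H2 : HasFDerivAt (fun w => h (f w))
      ((ContinuousLinearMap.restrictScalars ℝ (fderiv ℂ h (f z))).comp (fderiv ℝ f z)) z := H
  rw [wDzbar, wDzbar, H2.fderiv]
  simp only [ContinuousLinearMap.coe_comp', Function.comp_apply,
    ContinuousLinearMap.coe_restrictScalars', fderivC_apply]
  ring

lemma normsq_c (w : ℂ) : ((‖w‖:ℂ))^2 = w * (starRingEnd ℂ) w := by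
  have h1 : ‖w‖^2 = Complex.normSq w := by rw [Complex.sq_norm]
  rw [← Complex.ofReal_pow, h1, Complex.mul_conj]

lemma key_alg (a b d e u z w : ℂ) (ht : 1 - a*b ≠ 0) (hd : d ≠ 0) :
    (1 - z*w) * ((-z * (u/d/2) - 1)
      + ((-z*b + (1 - z*w)*e) * (d * (1-a*b)⁻¹)
        + ((1-z*w)*b) * (d * (((1-a*b)^2)⁻¹ * (a*e)))))
    = -z * ((1 - z*w)/2 * (u/d) - w + (1-z*w)*b*d/(1-a*b))
      + ((1-z*w)*d/(1-a*b)) * ((1-z*w)*e/(1-a*b)) - 1 := by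
  have ht2 : ((1:ℂ)-a*b)^2 ≠ 0 := pow_ne_zero _ ht
  have ht3 : (1:ℂ) - b*a ≠ 0 := by rwa [mul_comm]
  field_simp
  ring

theorem wirtinger_dzbar_of_A
    (φ : ℂ → ℂ)
    (hφ : DifferentiableOn ℂ φ (ball (0:ℂ) 1))
    (hφm : MapsTo φ (ball (0:ℂ) 1) (ball (0:ℂ) 1))
    (hφnc : ¬ ∃ c, ∀ z ∈ ball (0:ℂ) 1, φ z = c) :
    ∀ z ∈ ball (0:ℂ) 1, deriv φ z ≠ 0 →
      (1 - (‖z‖ : ℂ)^2) * wDzbar (Ah φ) z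
        = -z * Ah φ z + ((‖Dh φ z‖ : ℝ) : ℂ)^2 - 1 := by
  intro z hz hd
  have hball : ball (0:ℂ) 1 ∈ 𝓝 z := isOpen_ball.mem_nhds hz
  have han : AnalyticOnNhd ℂ φ (ball (0:ℂ) 1) := hφ.analyticOnNhd isOpen_ball
  have hdφ : DifferentiableAt ℂ φ z := (han z hz).differentiableAt
  have hd1 : DifferentiableAt ℂ (deriv φ) z := ((han.deriv) z hz).differentiableAt
  have hd2 : DifferentiableAt ℂ (deriv (deriv φ)) z := ((han.deriv.deriv) z hz).differentiableAt
  -- nonvanishing denominator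
  have hφz : ‖φ z‖ < 1 := by simpa using hφm hz
  have hnlt : Complex.normSq (φ z) < 1 := by
    rw [Complex.normSq_eq_norm_sq]; nlinarith [norm_nonneg (φ z)]
  have ht : (1:ℂ) - φ z * (starRingEnd ℂ) (φ z) ≠ 0 := by
    rw [Complex.mul_conj, sub_ne_zero]
    intro h
    have : (1:ℝ) = Complex.normSq (φ z) := by exact_mod_cast h
    linarith
  -- rewrite Ah as a nicer function
  have hF : Ah φ = fun w => (1 - w * (starRingEnd ℂ) w) * (deriv (deriv φ) w / deriv φ w / 2)
      - (starRingEnd ℂ) w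
      + ((1 - w * (starRingEnd ℂ) w) * (starRingEnd ℂ) (φ w))
        * (deriv φ w * (1 - φ w * (starRingEnd ℂ) (φ w))⁻¹) := by
    funext w
    simp only [Ah]
    rw [normsq_c, normsq_c]
    ring
  -- differentiability of the pieces (over ℝ)
  have hid : DifferentiableAt ℝ (fun w : ℂ => w) z := differentiableAt_fun_id
  have hconjR : DifferentiableAt ℝ (fun w : ℂ => (starRingEnd ℂ) w) z := diffR_conj hid
  have hpR : DifferentiableAt ℝ (fun w : ℂ => 1 - w * (starRingEnd ℂ) w) z :=
    (differentiableAt_const _).sub (hid.mul hconjR)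
  have hQC : DifferentiableAt ℂ (fun w => deriv (deriv φ) w / deriv φ w / 2) z :=
    (hd2.div hd1 hd).div_const 2
  have hQR : DifferentiableAt ℝ (fun w => deriv (deriv φ) w / deriv φ w / 2) z :=
    hQC.restrictScalars ℝ
  have hφR : DifferentiableAt ℝ φ z := hdφ.restrictScalars ℝ
  have hcφR : DifferentiableAt ℝ (fun w => (starRingEnd ℂ) (φ w)) z := diffR_conj hφR
  have htR : DifferentiableAt ℝ (fun w => (1:ℂ) - φ w * (starRingEnd ℂ) (φ w)) z :=
    (differentiableAt_const _).sub (hφR.mul hcφR)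
  have hsR : DifferentiableAt ℝ (fun w => ((1:ℂ) - φ w * (starRingEnd ℂ) (φ w))⁻¹) z :=
    htR.inv ht
  have hd1R : DifferentiableAt ℝ (deriv φ) z := hd1.restrictScalars ℝ
  -- Wirtinger values of the pieces
  have wid : wDzbar (fun w : ℂ => w) z = 0 := wDzbar_holo differentiableAt_fun_id
  have wconj : wDzbar (fun w : ℂ => (starRingEnd ℂ) w) z = 1 := by
    have h := wDzbar_conjf (f := fun w : ℂ => w) (z := z) differentiableAt_fun_id
    simpa using h
  have wp : wDzbar (fun w : ℂ => 1 - w * (starRingEnd ℂ) w) z = -z := by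
    have h1 : wDzbar (fun w : ℂ => 1 - w * (starRingEnd ℂ) w) z
        = wDzbar (fun _ : ℂ => (1:ℂ)) z - wDzbar (fun w : ℂ => w * (starRingEnd ℂ) w) z :=
      wDzbar_sub (differentiableAt_const _) (hid.mul hconjR)
    have h2 : wDzbar (fun w : ℂ => w * (starRingEnd ℂ) w) z
        = wDzbar (fun w : ℂ => w) z * (starRingEnd ℂ) z + z * wDzbar (fun w : ℂ => (starRingEnd ℂ) w) z :=
      wDzbar_mul hid hconjR
    rw [h1, h2, wid, wconj, wDzbar_holo (differentiableAt_const _)]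
    ring
  have wQ : wDzbar (fun w => deriv (deriv φ) w / deriv φ w / 2) z = 0 := wDzbar_holo hQC
  have wcφ : wDzbar (fun w => (starRingEnd ℂ) (φ w)) z = (starRingEnd ℂ) (deriv φ z) :=
    wDzbar_conjf hdφ
  have wpQ : wDzbar (fun w : ℂ => (1 - w * (starRingEnd ℂ) w)
      * (deriv (deriv φ) w / deriv φ w / 2)) z
      = -z * (deriv (deriv φ) z / deriv φ z / 2) := by
    have h : wDzbar (fun w : ℂ => (1 - w * (starRingEnd ℂ) w)
        * (deriv (deriv φ) w / deriv φ w / 2)) z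
        = wDzbar (fun w : ℂ => 1 - w * (starRingEnd ℂ) w) z * (deriv (deriv φ) z / deriv φ z / 2)
          + (1 - z * (starRingEnd ℂ) z) * wDzbar (fun w => deriv (deriv φ) w / deriv φ w / 2) z :=
      wDzbar_mul hpR hQR
    rw [h, wp, wQ]; ring
  have wpc : wDzbar (fun w : ℂ => (1 - w * (starRingEnd ℂ) w) * (starRingEnd ℂ) (φ w)) z
      = -z * (starRingEnd ℂ) (φ z) + (1 - z * (starRingEnd ℂ) z) * (starRingEnd ℂ) (deriv φ z) := by
    have h : wDzbar (fun w : ℂ => (1 - w * (starRingEnd ℂ) w) * (starRingEnd ℂ) (φ w)) z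
        = wDzbar (fun w : ℂ => 1 - w * (starRingEnd ℂ) w) z * (starRingEnd ℂ) (φ z)
          + (1 - z * (starRingEnd ℂ) z) * wDzbar (fun w => (starRingEnd ℂ) (φ w)) z :=
      wDzbar_mul hpR hcφR
    rw [h, wp, wcφ]
  have wt : wDzbar (fun w : ℂ => (1:ℂ) - φ w * (starRingEnd ℂ) (φ w)) z
      = -(φ z * (starRingEnd ℂ) (deriv φ z)) := by
    have h1 : wDzbar (fun w : ℂ => (1:ℂ) - φ w * (starRingEnd ℂ) (φ w)) z
        = wDzbar (fun _ : ℂ => (1:ℂ)) z - wDzbar (fun w : ℂ => φ w * (starRingEnd ℂ) (φ w)) z :=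
      wDzbar_sub (differentiableAt_const _) (hφR.mul hcφR)
    have h2 : wDzbar (fun w : ℂ => φ w * (starRingEnd ℂ) (φ w)) z
        = wDzbar φ z * (starRingEnd ℂ) (φ z) + φ z * wDzbar (fun w => (starRingEnd ℂ) (φ w)) z :=
      wDzbar_mul hφR hcφR
    rw [h1, h2, wcφ, wDzbar_holo hdφ, wDzbar_holo (differentiableAt_const _)]
    ring
  have hinvd : DifferentiableAt ℂ (fun x : ℂ => x⁻¹) ((1:ℂ) - φ z * (starRingEnd ℂ) (φ z)) :=
    differentiableAt_inv ht
  have ws : wDzbar (fun w : ℂ => ((1:ℂ) - φ w * (starRingEnd ℂ) (φ w))⁻¹) z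
      = (((1:ℂ) - φ z * (starRingEnd ℂ) (φ z))^2)⁻¹ * (φ z * (starRingEnd ℂ) (deriv φ z)) := by
    have h : wDzbar (fun w : ℂ => ((1:ℂ) - φ w * (starRingEnd ℂ) (φ w))⁻¹) z
        = deriv (fun x : ℂ => x⁻¹) ((1:ℂ) - φ z * (starRingEnd ℂ) (φ z))
          * wDzbar (fun w : ℂ => (1:ℂ) - φ w * (starRingEnd ℂ) (φ w)) z :=
      wDzbar_comp_holo (h := fun x : ℂ => x⁻¹)
        (f := fun w : ℂ => (1:ℂ) - φ w * (starRingEnd ℂ) (φ w)) hinvd htR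
    rw [h, wt, deriv_inv]
    ring
  have wds : wDzbar (fun w : ℂ => deriv φ w * ((1:ℂ) - φ w * (starRingEnd ℂ) (φ w))⁻¹) z
      = deriv φ z * ((((1:ℂ) - φ z * (starRingEnd ℂ) (φ z))^2)⁻¹
          * (φ z * (starRingEnd ℂ) (deriv φ z))) := by
    have h : wDzbar (fun w : ℂ => deriv φ w * ((1:ℂ) - φ w * (starRingEnd ℂ) (φ w))⁻¹) z
        = wDzbar (deriv φ) z * ((1:ℂ) - φ z * (starRingEnd ℂ) (φ z))⁻¹
          + deriv φ z * wDzbar (fun w : ℂ => ((1:ℂ) - φ w * (starRingEnd ℂ) (φ w))⁻¹) z :=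
      wDzbar_mul hd1R hsR
    rw [h, ws, wDzbar_holo hd1]
    ring
  have wF3 : wDzbar (fun w : ℂ => ((1 - w * (starRingEnd ℂ) w) * (starRingEnd ℂ) (φ w))
      * (deriv φ w * ((1:ℂ) - φ w * (starRingEnd ℂ) (φ w))⁻¹)) z
      = (-z * (starRingEnd ℂ) (φ z) + (1 - z * (starRingEnd ℂ) z) * (starRingEnd ℂ) (deriv φ z))
          * (deriv φ z * ((1:ℂ) - φ z * (starRingEnd ℂ) (φ z))⁻¹)
        + ((1 - z * (starRingEnd ℂ) z) * (starRingEnd ℂ) (φ z))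
          * (deriv φ z * ((((1:ℂ) - φ z * (starRingEnd ℂ) (φ z))^2)⁻¹
              * (φ z * (starRingEnd ℂ) (deriv φ z)))) := by
    have h : wDzbar (fun w : ℂ => ((1 - w * (starRingEnd ℂ) w) * (starRingEnd ℂ) (φ w))
        * (deriv φ w * ((1:ℂ) - φ w * (starRingEnd ℂ) (φ w))⁻¹)) z
        = wDzbar (fun w : ℂ => (1 - w * (starRingEnd ℂ) w) * (starRingEnd ℂ) (φ w)) z
            * (deriv φ z * ((1:ℂ) - φ z * (starRingEnd ℂ) (φ z))⁻¹)
          + ((1 - z * (starRingEnd ℂ) z) * (starRingEnd ℂ) (φ z))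
            * wDzbar (fun w : ℂ => deriv φ w * ((1:ℂ) - φ w * (starRingEnd ℂ) (φ w))⁻¹) z :=
      wDzbar_mul (hpR.mul hcφR) (hd1R.mul hsR)
    rw [h, wpc, wds]
  have wF12 : wDzbar (fun w : ℂ => (1 - w * (starRingEnd ℂ) w)
      * (deriv (deriv φ) w / deriv φ w / 2) - (starRingEnd ℂ) w) z
      = -z * (deriv (deriv φ) z / deriv φ z / 2) - 1 := by
    have h : wDzbar (fun w : ℂ => (1 - w * (starRingEnd ℂ) w)
        * (deriv (deriv φ) w / deriv φ w / 2) - (starRingEnd ℂ) w) z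
        = wDzbar (fun w : ℂ => (1 - w * (starRingEnd ℂ) w)
            * (deriv (deriv φ) w / deriv φ w / 2)) z
          - wDzbar (fun w : ℂ => (starRingEnd ℂ) w) z :=
      wDzbar_sub (hpR.mul hQR) hconjR
    rw [h, wpQ, wconj]
  have wAll : wDzbar (Ah φ) z
      = (-z * (deriv (deriv φ) z / deriv φ z / 2) - 1)
        + ((-z * (starRingEnd ℂ) (φ z) + (1 - z * (starRingEnd ℂ) z) * (starRingEnd ℂ) (deriv φ z))
            * (deriv φ z * ((1:ℂ) - φ z * (starRingEnd ℂ) (φ z))⁻¹)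
          + ((1 - z * (starRingEnd ℂ) z) * (starRingEnd ℂ) (φ z))
            * (deriv φ z * ((((1:ℂ) - φ z * (starRingEnd ℂ) (φ z))^2)⁻¹
                * (φ z * (starRingEnd ℂ) (deriv φ z))))) := by
    rw [hF]
    have h : wDzbar (fun w : ℂ => (1 - w * (starRingEnd ℂ) w)
        * (deriv (deriv φ) w / deriv φ w / 2) - (starRingEnd ℂ) w
        + ((1 - w * (starRingEnd ℂ) w) * (starRingEnd ℂ) (φ w))
          * (deriv φ w * (1 - φ w * (starRingEnd ℂ) (φ w))⁻¹)) z
        = wDzbar (fun w : ℂ => (1 - w * (starRingEnd ℂ) w)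
            * (deriv (deriv φ) w / deriv φ w / 2) - (starRingEnd ℂ) w) z
          + wDzbar (fun w : ℂ => ((1 - w * (starRingEnd ℂ) w) * (starRingEnd ℂ) (φ w))
            * (deriv φ w * ((1:ℂ) - φ w * (starRingEnd ℂ) (φ w))⁻¹)) z :=
      wDzbar_add ((hpR.mul hQR).sub hconjR) ((hpR.mul hcφR).mul (hd1R.mul hsR))
    rw [h, wF12, wF3]
  -- final algebra
  have habs : ((‖Dh φ z‖ : ℝ) : ℂ)^2 = Dh φ z * (starRingEnd ℂ) (Dh φ z) := by
    rw [← Complex.ofReal_pow, Complex.sq_norm, Complex.mul_conj]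
  have hDh : Dh φ z * (starRingEnd ℂ) (Dh φ z)
      = ((1 - z * (starRingEnd ℂ) z) * deriv φ z / (1 - φ z * (starRingEnd ℂ) (φ z)))
        * ((1 - z * (starRingEnd ℂ) z) * (starRingEnd ℂ) (deriv φ z)
            / (1 - φ z * (starRingEnd ℂ) (φ z))) := by
    simp only [Dh, normsq_c, map_div₀, map_mul, map_sub, map_one, Complex.conj_conj]
    ring
  have hAh : Ah φ z = (1 - z * (starRingEnd ℂ) z) / 2 * (deriv (deriv φ) z / deriv φ z)
      - (starRingEnd ℂ) z
      + (1 - z * (starRingEnd ℂ) z) * (starRingEnd ℂ) (φ z) * deriv φ z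
          / (1 - φ z * (starRingEnd ℂ) (φ z)) := by
    simp only [Ah, normsq_c]
  rw [wAll, habs, hDh, hAh, normsq_c]
  exact key_alg (φ z) ((starRingEnd ℂ) (φ z)) (deriv φ z) ((starRingEnd ℂ) (deriv φ z))
    (deriv (deriv φ) z) z ((starRingEnd ℂ) z) ht hd
end

section
/- Let φ(z) = e^{-g(z)} with g(z) = ((1+z)/(1-z))^a, 0 < a < 1 (principal branch). Then A_φ(z) ≠ 0 for every z in the unit disk, where A_φ(z) = ((1-|z|²)/2)φ''(z)/φ'(z) - z̄ + (1-|z|²)·conj(φ(z))φ'(z)/(1-|φ(z)|²). -/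
open Complex Metric Set Filter Asymptotics Topology

/- ## Auxiliary lemmas -/

lemma ELMA.sinh_lt_mul_cosh {u : ℝ} (hu : 0 < u) : Real.sinh u < u * Real.cosh u := by
  have hmono : StrictMonoOn (fun x : ℝ => x * Real.cosh x - Real.sinh x) (Set.Ici 0) := by
    apply strictMonoOn_of_deriv_pos (convex_Ici 0)
    · exact ((continuous_id.mul Real.continuous_cosh).sub Real.continuous_sinh).continuousOn
    · intro x hx
      rw [interior_Ici] at hx
      have h : HasDerivAt (fun x : ℝ => x * Real.cosh x - Real.sinh x) (x * Real.sinh x) x := by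
        have h2 := ((hasDerivAt_id x).mul (Real.hasDerivAt_cosh x)).sub (Real.hasDerivAt_sinh x)
        refine h2.congr_deriv ?_
        rw [id_eq]; ring
      rw [h.deriv]
      exact mul_pos hx (Real.sinh_pos_iff.2 hx)
  have h := hmono (Set.mem_Ici.2 le_rfl) (Set.mem_Ici.2 hu.le) hu
  simpa using h

lemma ELMA.key_ineq {u : ℝ} (hu : 0 < u) :
    1 - Real.exp (-(2*u)) < u * (1 + Real.exp (-(2*u))) := by
  have h := ELMA.sinh_lt_mul_cosh hu
  rw [Real.sinh_eq, Real.cosh_eq] at h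
  have he : Real.exp (-(2*u)) = Real.exp (-u) * Real.exp (-u) := by
    rw [← Real.exp_add]; ring_nf
  have h1 : Real.exp (-u) * Real.exp u = 1 := by rw [← Real.exp_add]; simp
  nlinarith [Real.exp_pos (-u), Real.exp_pos u, h]

lemma ELMA.re_cpow_pos {w : ℂ} (hw : 0 < w.re) {a : ℝ} (ha : 0 < a) (ha1 : a < 1) :
    0 < (w ^ (a:ℂ)).re := by
  have hw0 : w ≠ 0 := fun h => by simp [h] at hw
  rw [Complex.cpow_def_of_ne_zero hw0, Complex.exp_re]
  apply mul_pos (Real.exp_pos _)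
  apply Real.cos_pos_of_mem_Ioo
  have harg : |w.arg| < Real.pi/2 := Complex.abs_arg_lt_pi_div_two_iff.2 (Or.inl hw)
  have him : (Complex.log w * (a:ℂ)).im = a * w.arg := by
    simp [Complex.mul_im, Complex.log_im]
    ring
  rw [him]
  have h2 : |a * w.arg| < Real.pi/2 := by
    rw [abs_mul, abs_of_pos ha]
    calc a * |w.arg| ≤ 1 * |w.arg| := by
          apply mul_le_mul_of_nonneg_right ha1.le (abs_nonneg _)
      _ < Real.pi/2 := by rw [one_mul]; exact harg
  exact abs_lt.1 h2

lemma ELMA.ball_facts {x : ℂ} (hx : ‖x‖ < 1) :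
    (1:ℂ) - x ≠ 0 ∧ (1:ℂ) + x ≠ 0 ∧ (1:ℂ) - x^2 ≠ 0 := by
  have h1 : (1:ℂ) - x ≠ 0 := by
    intro h
    have : x = 1 := by linear_combination -h
    simp [this] at hx
  have h2 : (1:ℂ) + x ≠ 0 := by
    intro h
    have : x = -1 := by linear_combination h
    simp [this] at hx
  refine ⟨h1, h2, ?_⟩
  have : (1:ℂ) - x^2 = (1-x)*(1+x) := by ring
  rw [this]
  exact mul_ne_zero h1 h2

lemma ELMA.wre_pos {x : ℂ} (hx : ‖x‖ < 1) : 0 < ((1+x)/(1-x)).re := by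
  obtain ⟨h1, -, -⟩ := ELMA.ball_facts hx
  rw [Complex.div_re]
  have hN : 0 < Complex.normSq (1-x) := Complex.normSq_pos.2 h1
  have hlt : x.re*x.re + x.im*x.im < 1 := by
    have h := pow_lt_one₀ (norm_nonneg x) hx two_ne_zero
    rwa [Complex.sq_norm, Complex.normSq_apply] at h
  rw [← add_div]
  apply div_pos ?_ hN
  simp only [Complex.add_re, Complex.one_re, Complex.sub_re, Complex.add_im, Complex.one_im,
    Complex.sub_im, zero_add, zero_sub]
  nlinarith

/-- the lens map `g`. -/
noncomputable def ELMA.gfun (a : ℝ) : ℂ → ℂ := fun z => ((1 + z) / (1 - z)) ^ (a : ℂ)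

/-- `φ = exp (-g)`. -/
noncomputable def ELMA.phifun (a : ℝ) : ℂ → ℂ := fun z => Complex.exp (-(ELMA.gfun a z))

lemma ELMA.gfun_ne_zero (a : ℝ) {x : ℂ} (hx : ‖x‖ < 1) : ELMA.gfun a x ≠ 0 := by
  obtain ⟨h1, h2, h3⟩ := ELMA.ball_facts hx
  have hW0 : (1+x)/(1-x) ≠ 0 := div_ne_zero h2 h1
  simp only [ELMA.gfun]
  intro h
  exact hW0 ((Complex.cpow_eq_zero_iff _ _).1 h).1

lemma ELMA.hasDerivAt_gfun (a : ℝ) {x : ℂ} (hx : ‖x‖ < 1) :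
    HasDerivAt (ELMA.gfun a) (2*a*(ELMA.gfun a x)/(1-x^2)) x := by
  obtain ⟨h1, h2, h3⟩ := ELMA.ball_facts hx
  have hWre := ELMA.wre_pos hx
  have hW0 : (1+x)/(1-x) ≠ 0 := fun h => by simp [h] at hWre
  have hWd : HasDerivAt (fun y : ℂ => (1+y)/(1-y)) (2/(1-x)^2) x := by
    have hnum : HasDerivAt (fun y : ℂ => 1 + y) 1 x := (hasDerivAt_id x).const_add 1
    have hden : HasDerivAt (fun y : ℂ => 1 - y) (-1) x := by
      simpa using (hasDerivAt_id x).const_sub 1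
    have h := hnum.div hden h1
    refine h.congr_deriv ?_
    ring
  have hc : HasDerivAt (fun y : ℂ => ((1+y)/(1-y)) ^ (a:ℂ))
      ((a:ℂ) * ((1+x)/(1-x)) ^ ((a:ℂ)-1) * (2/(1-x)^2)) x :=
    hWd.cpow_const (Or.inl hWre)
  have heq : (a:ℂ) * ((1+x)/(1-x)) ^ ((a:ℂ)-1) * (2/(1-x)^2) = 2*a*(ELMA.gfun a x)/(1-x^2) := by
    have h := Complex.cpow_sub (a:ℂ) 1 hW0
    rw [Complex.cpow_one] at h
    rw [h]
    simp only [ELMA.gfun]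
    field_simp
    ring
  rw [heq] at hc
  exact hc

lemma ELMA.hasDerivAt_G1 (a : ℝ) {x : ℂ} (hx : ‖x‖ < 1) :
    HasDerivAt (fun y => 2*(a:ℂ)*(ELMA.gfun a y)/(1-y^2))
      (4*a*((a:ℂ)+x)*(ELMA.gfun a x)/((1-x^2)^2)) x := by
  obtain ⟨h1, h2, h3⟩ := ELMA.ball_facts hx
  have hN : HasDerivAt (fun y => 2*(a:ℂ)*(ELMA.gfun a y))
      (2*(a:ℂ)*(2*a*(ELMA.gfun a x)/(1-x^2))) x :=
    (ELMA.hasDerivAt_gfun a hx).const_mul _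
  have hD : HasDerivAt (fun y : ℂ => 1 - y^2) (-(2*x)) x := by
    simpa using ((hasDerivAt_pow 2 x)).const_sub 1
  have h := hN.div hD h3
  refine h.congr_deriv ?_
  field_simp
  ring

lemma ELMA.hasDerivAt_phifun (a : ℝ) {x : ℂ} (hx : ‖x‖ < 1) :
    HasDerivAt (ELMA.phifun a) (-(2*a*(ELMA.gfun a x)/(1-x^2)) * ELMA.phifun a x) x := by
  have h := ((ELMA.hasDerivAt_gfun a hx).neg).cexp
  refine h.congr_deriv ?_
  rw [mul_comm]; rfl

set_option maxHeartbeats 1000000 in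
lemma ELMA.alg (A G z cz p T : ℂ) (h3 : 1 - z^2 ≠ 0) (hT : 1 - T ≠ 0) (hG : G ≠ 0)
    (hA : A ≠ 0) (hp : p ≠ 0) :
    (1 - z^2) * ((1 - z*cz)/2 * (((2*A*G/(1-z^2))^2 - 4*A*(A+z)*G/(1-z^2)^2) * p
        / (-(2*A*G/(1-z^2)) * p)) - cz
      + (1 - z*cz) * (T/p) * (-(2*A*G/(1-z^2)) * p) / (1 - T))
    = (z - cz) + A*(1 - z*cz)*(1 - G) - 2*A*(1-z*cz)*G*T/(1-T) := by
  have e1 : ((2*A*G/(1-z^2))^2 - 4*A*(A+z)*G/(1-z^2)^2) * p / (-(2*A*G/(1-z^2)) * p)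
      = (2*(A+z) - 2*A*G)/(1-z^2) := by
    rw [div_eq_div_iff (by simp [hA, hG, h3, hp] : -(2*A*G/(1-z^2)) * p ≠ 0) (by simpa using h3)]
    field_simp
    ring
  rw [e1]
  have e2 : (1 - z*cz) * (T/p) * (-(2*A*G/(1-z^2)) * p) / (1 - T)
      = -((1 - z*cz) * T * (2*A*G) / ((1-z^2)*(1 - T))) := by
    field_simp
  rw [e2]
  field_simp
  ring

theorem exp_lens_map_A_nonvanishing (a : ℝ) (ha : 0 < a) (ha1 : a < 1) :
    let g : ℂ → ℂ := fun z => ((1 + z) / (1 - z)) ^ (a : ℂ)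
    let φ : ℂ → ℂ := fun z => Complex.exp (-(g z))
    ∀ z ∈ ball (0:ℂ) 1, Ah φ z ≠ 0 := by
  intro g φ z hz
  have hφeq : φ = ELMA.phifun a := rfl
  rw [hφeq]
  clear hφeq
  rw [mem_ball, dist_zero_right] at hz
  obtain ⟨h1, h2, h3⟩ := ELMA.ball_facts hz
  have hWre := ELMA.wre_pos hz
  set G : ℂ := ELMA.gfun a z with hGdef
  have hu : 0 < G.re := ELMA.re_cpow_pos hWre ha ha1
  set u : ℝ := G.re with hudef
  set t : ℝ := Real.exp (-(2*u)) with htdef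
  have ht0 : 0 < t := Real.exp_pos _
  have ht1 : t < 1 := by
    rw [htdef]
    apply Real.exp_lt_one_iff.2
    linarith
  have htne : (1:ℂ) - (t:ℂ) ≠ 0 := by
    intro h
    have h' : ((1 - t : ℝ) : ℂ) = 0 := by push_cast; linear_combination h
    rw [Complex.ofReal_eq_zero] at h'
    linarith
  have hGne : G ≠ 0 := ELMA.gfun_ne_zero a hz
  have haC : (a:ℂ) ≠ 0 := Complex.ofReal_ne_zero.2 ha.ne'
  have hφne : ELMA.phifun a z ≠ 0 := Complex.exp_ne_zero _
  -- first derivative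
  have hd1 : deriv (ELMA.phifun a) z = -(2*a*G/(1-z^2)) * ELMA.phifun a z :=
    (ELMA.hasDerivAt_phifun a hz).deriv
  -- second derivative
  have hEv : deriv (ELMA.phifun a) =ᶠ[nhds z]
      fun x => -(2*(a:ℂ)*(ELMA.gfun a x)/(1-x^2)) * ELMA.phifun a x := by
    filter_upwards [isOpen_ball.mem_nhds (by rwa [mem_ball, dist_zero_right] : z ∈ ball (0:ℂ) 1)]
      with x hx
    rw [mem_ball, dist_zero_right] at hx
    exact (ELMA.hasDerivAt_phifun a hx).deriv
  have hd2 : deriv (deriv (ELMA.phifun a)) z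
      = ((2*a*G/(1-z^2))^2 - 4*a*((a:ℂ)+z)*G/((1-z^2)^2)) * ELMA.phifun a z := by
    rw [hEv.deriv_eq]
    have hprod : HasDerivAt (fun x => -(2*(a:ℂ)*(ELMA.gfun a x)/(1-x^2)) * ELMA.phifun a x)
        (-(4*a*((a:ℂ)+z)*(ELMA.gfun a z)/((1-z^2)^2)) * ELMA.phifun a z
          + -(2*a*(ELMA.gfun a z)/(1-z^2))
            * (-(2*a*(ELMA.gfun a z)/(1-z^2)) * ELMA.phifun a z)) z :=
      ((ELMA.hasDerivAt_G1 a hz).neg).mul (ELMA.hasDerivAt_phifun a hz)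
    rw [hprod.deriv, ← hGdef]
    ring
  -- norm facts
  have hnormφ : ‖ELMA.phifun a z‖ = Real.exp (-u) := by
    rw [ELMA.phifun, Complex.norm_exp]
    simp [hudef, hGdef]
  have hT : ((‖ELMA.phifun a z‖ : ℝ) : ℂ)^2 = (t:ℂ) := by
    rw [hnormφ, ← Complex.ofReal_pow]
    congr 1
    rw [htdef, pow_two, ← Real.exp_add]
    ring_nf
  have hzc : ((‖z‖ : ℝ) : ℂ)^2 = z * (starRingEnd ℂ) z := by
    rw [Complex.mul_conj, Complex.normSq_eq_norm_sq]
    push_cast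
    ring
  have hconj : (starRingEnd ℂ) (ELMA.phifun a z) = (t:ℂ) / ELMA.phifun a z := by
    rw [eq_div_iff hφne]
    have h := Complex.mul_conj (ELMA.phifun a z)
    rw [mul_comm] at h
    rw [h, Complex.normSq_eq_norm_sq]
    exact_mod_cast hT
  -- key algebraic identity
  have key : (1 - z^2) * Ah (ELMA.phifun a) z
      = (z - (starRingEnd ℂ) z) + (a:ℂ)*(1 - z*(starRingEnd ℂ) z) * (1 - G)
        - 2*(a:ℂ)*(1 - z*(starRingEnd ℂ) z) * G * (t:ℂ)/(1-(t:ℂ)) := by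
    rw [Ah, hd1, hd2, hzc, hT, hconj]
    exact ELMA.alg (a:ℂ) G z ((starRingEnd ℂ) z) (ELMA.phifun a z) (t:ℂ) h3 htne hGne haC hφne
  -- real part
  have hzz : ((1-‖z‖^2 : ℝ):ℂ) = 1 - z * (starRingEnd ℂ) z := by
    push_cast
    rw [hzc]
  have key2 : (1 - z^2) * Ah (ELMA.phifun a) z
      = (z - (starRingEnd ℂ) z) + ((a*(1-‖z‖^2) : ℝ):ℂ) * (1 - G)
        - ((2*a*(1-‖z‖^2)*t/(1-t) : ℝ):ℂ) * G := by
    rw [key]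
    push_cast
    rw [hzc]
    field_simp
  have hre : ((1 - z^2) * Ah (ELMA.phifun a) z).re
      = (a*(1-‖z‖^2)) * (1 - u) - (2*a*(1-‖z‖^2)*t/(1-t)) * u := by
    rw [key2]
    simp only [Complex.add_re, Complex.sub_re, Complex.re_ofReal_mul, Complex.one_re,
      Complex.conj_re]
    ring
  -- negativity
  have hr2 : 0 < 1 - ‖z‖^2 := by
    have := pow_lt_one₀ (norm_nonneg z) hz two_ne_zero
    linarith
  have hR : 0 < a*(1-‖z‖^2) := mul_pos ha hr2
  have hkey := ELMA.key_ineq hu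
  rw [← htdef] at hkey
  have h1t : 0 < 1 - t := by linarith
  have hinv : (1-t) * (2*a*(1-‖z‖^2)*t/(1-t)) = 2*(a*(1-‖z‖^2))*t := by
    rw [mul_comm, div_mul_cancel₀ _ h1t.ne']
    ring
  have hneg : ((1 - z^2) * Ah (ELMA.phifun a) z).re < 0 := by
    rw [hre]
    nlinarith [mul_lt_mul_of_pos_left hkey hR, hinv, mul_pos hR h1t, hu, ht0,
      mul_pos hR hu]
  intro hA0
  rw [hA0, mul_zero] at hneg
  simp at hneg
end
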